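/- For real z with 0 < |z| < 1, the power series ∑_{k=1}^∞ (2/((k+1)(k+2))) z^k equals (2z − z² − 2(1−z)·log(1/(1−z)))/z². -/
import Mathlib


theorem increment_generating_function (z : ℝ) (h0 : 0 < |z|) (h1 : |z| < 1) :
    ∑' k : ℕ, ((2 : ℝ) / (((k + 1) + 1) * ((k + 1) + 2))) * z ^ (k + 1)
      = (2 * z - z ^ 2 - 2 * (1 - z) * Real.log (1 / (1 - z))) / z ^ 2 := by
  have hz : z ≠ 0 := abs_ne_zero.mp (ne_of_gt h0)
  have hz1 : (1 : ℝ) - z ≠ 0 := by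
    have : z < 1 := lt_of_abs_lt h1
    linarith
  have hL := Real.hasSum_pow_div_log_of_abs_lt_one h1
  have ha := (hasSum_nat_add_iff' 1).mpr hL
  have hb := (hasSum_nat_add_iff' 2).mpr hL
  simp only [Finset.sum_range_succ, Finset.range_one, Finset.sum_singleton] at ha hb
  norm_num at ha hb
  set L := -Real.log (1 - z) with hLdef
  have hsum : HasSum (fun k : ℕ => ((2 : ℝ) / (((k : ℝ) + 1 + 1) * ((k : ℝ) + 1 + 2))) * z ^ (k + 1))
      ((2 / z) * (L - z) - (2 / z ^ 2) * (L - (z + z ^ 2 / 2))) := by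
    have h := (ha.mul_left (2 / z)).sub (hb.mul_left (2 / z ^ 2))
    refine h.congr_fun fun n => ?_
    have hn2 : ((n : ℝ) + 1 + 1) ≠ 0 := by positivity
    have hn3 : ((n : ℝ) + 1 + 2) ≠ 0 := by positivity
    field_simp
    ring
  rw [hsum.tsum_eq]
  have hlog : Real.log (1 / (1 - z)) = -Real.log (1 - z) := by
    rw [one_div, Real.log_inv]
  rw [hlog, hLdef]
  field_simp
  ring
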